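/- Combining the previous claims: for A a 0/1 matrix with the consecutive-ones property in columns and c an integer vector, there exists a 0/1 vector x with Ax ≤ c and A(1−x) ≤ c if and only if A·1 ≤ 2c. -/

import Mathlib

set_option linter.unusedSectionVars false

namespace Stmt10Aux

variable {α : Type*} [DecidableEq α]

def cross (S : Multiset ((ℕ × ℕ) × α)) (t : ℕ) : ℕ :=
  (S.filter fun e => e.1.1 ≤ t ∧ t < e.1.2).card

def deg (S : Multiset ((ℕ × ℕ) × α)) (v : ℕ) : ℕ :=
  (S.filter fun e => e.1.1 = v).card + (S.filter fun e => e.1.2 = v).card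

@[simp] lemma cross_zero (t : ℕ) : cross (0 : Multiset ((ℕ × ℕ) × α)) t = 0 := rfl

@[simp] lemma cross_add (S T : Multiset ((ℕ × ℕ) × α)) (t : ℕ) :
    cross (S + T) t = cross S t + cross T t := by
  simp [cross, Multiset.filter_add]

@[simp] lemma cross_singleton (e : (ℕ × ℕ) × α) (t : ℕ) :
    cross ({e} : Multiset ((ℕ × ℕ) × α)) t = if e.1.1 ≤ t ∧ t < e.1.2 then 1 else 0 := by
  simp [cross, Multiset.filter_singleton]
  split <;> simp

@[simp] lemma cross_cons (e : (ℕ × ℕ) × α) (S : Multiset ((ℕ × ℕ) × α)) (t : ℕ) :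
    cross (e ::ₘ S) t = (if e.1.1 ≤ t ∧ t < e.1.2 then 1 else 0) + cross S t := by
  rw [show e ::ₘ S = {e} + S from rfl, cross_add, cross_singleton]

@[simp] lemma deg_zero (v : ℕ) : deg (0 : Multiset ((ℕ × ℕ) × α)) v = 0 := rfl

@[simp] lemma deg_add (S T : Multiset ((ℕ × ℕ) × α)) (v : ℕ) :
    deg (S + T) v = deg S v + deg T v := by
  simp [deg, Multiset.filter_add]; ring

@[simp] lemma deg_singleton (e : (ℕ × ℕ) × α) (v : ℕ) :
    deg ({e} : Multiset ((ℕ × ℕ) × α)) v =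
      (if e.1.1 = v then 1 else 0) + (if e.1.2 = v then 1 else 0) := by
  simp [deg, Multiset.filter_singleton]
  split <;> split <;> simp

@[simp] lemma deg_cons (e : (ℕ × ℕ) × α) (S : Multiset ((ℕ × ℕ) × α)) (v : ℕ) :
    deg (e ::ₘ S) v = (if e.1.1 = v then 1 else 0) + (if e.1.2 = v then 1 else 0) + deg S v := by
  rw [show e ::ₘ S = {e} + S from rfl, deg_add, deg_singleton]

/-- a balanced solution -/
def Sol (E : Multiset ((ℕ × ℕ) × α)) : Prop :=
  ∃ P N : Multiset ((ℕ × ℕ) × α), P + N = E ∧ ∀ t, cross P t = cross N t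

/-- same-sign merge -/
lemma helper1 {E'' : Multiset ((ℕ × ℕ) × α)} (e k m : (ℕ × ℕ) × α)
    (hm : ∀ t, cross {e} t + cross {k} t = cross ({m} : Multiset ((ℕ × ℕ) × α)) t)
    (h : Sol (m ::ₘ E'')) : Sol (e ::ₘ k ::ₘ E'') := by
  obtain ⟨P, N, hPN, hc⟩ := h
  have hmem : m ∈ P + N := by rw [hPN]; exact Multiset.mem_cons_self m E''
  rcases Multiset.mem_add.1 hmem with hmP | hmN
  · refine ⟨e ::ₘ k ::ₘ P.erase m, N, ?_, ?_⟩
    · have h1 : P.erase m + N = E'' := by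
        have h2 : (P + N).erase m = P.erase m + N := Multiset.erase_add_left_pos N hmP
        rw [hPN, Multiset.erase_cons_head] at h2
        exact h2.symm
      rw [show e ::ₘ k ::ₘ P.erase m + N = e ::ₘ k ::ₘ (P.erase m + N) by
        simp [Multiset.cons_add], h1]
    · intro t
      have hP : cross P t = cross ({m} : Multiset ((ℕ × ℕ) × α)) t + cross (P.erase m) t := by
        conv_lhs => rw [← Multiset.cons_erase hmP]
        rw [show m ::ₘ P.erase m = {m} + P.erase m from rfl, cross_add]
      have h3 := hm t
      have h4 := hc t
      simp only [cross_cons, cross_singleton] at *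
      omega
  · refine ⟨P, e ::ₘ k ::ₘ N.erase m, ?_, ?_⟩
    · have h1 : P + N.erase m = E'' := by
        have h2 : (P + N).erase m = P + N.erase m := Multiset.erase_add_right_pos P hmN
        rw [hPN, Multiset.erase_cons_head] at h2
        exact h2.symm
      calc P + (e ::ₘ k ::ₘ N.erase m) = e ::ₘ k ::ₘ (P + N.erase m) := by
            simp [Multiset.cons_swap]
        _ = e ::ₘ k ::ₘ E'' := by rw [h1]
    · intro t
      have hN : cross N t = cross ({m} : Multiset ((ℕ × ℕ) × α)) t + cross (N.erase m) t := by
        conv_lhs => rw [← Multiset.cons_erase hmN]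
        rw [show m ::ₘ N.erase m = {m} + N.erase m from rfl, cross_add]
      have h3 := hm t
      have h4 := hc t
      simp only [cross_cons, cross_singleton] at *
      omega

/-- opposite-sign merge: e is "long", k and m are the pieces -/
lemma helper2 {E'' : Multiset ((ℕ × ℕ) × α)} (e k m : (ℕ × ℕ) × α)
    (hm : ∀ t, cross ({e} : Multiset ((ℕ × ℕ) × α)) t = cross {k} t + cross {m} t)
    (h : Sol (m ::ₘ E'')) : Sol (e ::ₘ k ::ₘ E'') := by
  obtain ⟨P, N, hPN, hc⟩ := h
  have hmem : m ∈ P + N := by rw [hPN]; exact Multiset.mem_cons_self m E''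
  rcases Multiset.mem_add.1 hmem with hmP | hmN
  · refine ⟨e ::ₘ P.erase m, k ::ₘ N, ?_, ?_⟩
    · have h1 : P.erase m + N = E'' := by
        have h2 : (P + N).erase m = P.erase m + N := Multiset.erase_add_left_pos N hmP
        rw [hPN, Multiset.erase_cons_head] at h2
        exact h2.symm
      calc (e ::ₘ P.erase m) + (k ::ₘ N) = e ::ₘ k ::ₘ (P.erase m + N) := by
            simp [Multiset.cons_add, Multiset.cons_swap]
        _ = e ::ₘ k ::ₘ E'' := by rw [h1]
    · intro t
      have hP : cross P t = cross ({m} : Multiset ((ℕ × ℕ) × α)) t + cross (P.erase m) t := by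
        conv_lhs => rw [← Multiset.cons_erase hmP]
        rw [show m ::ₘ P.erase m = {m} + P.erase m from rfl, cross_add]
      have h3 := hm t
      have h4 := hc t
      simp only [cross_cons, cross_singleton] at *
      omega
  · refine ⟨k ::ₘ P, e ::ₘ N.erase m, ?_, ?_⟩
    · have h1 : P + N.erase m = E'' := by
        have h2 : (P + N).erase m = P + N.erase m := Multiset.erase_add_right_pos P hmN
        rw [hPN, Multiset.erase_cons_head] at h2
        exact h2.symm
      calc (k ::ₘ P) + (e ::ₘ N.erase m) = e ::ₘ k ::ₘ (P + N.erase m) := by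
            simp [Multiset.cons_add, Multiset.cons_swap]
        _ = e ::ₘ k ::ₘ E'' := by rw [h1]
    · intro t
      have hN : cross N t = cross ({m} : Multiset ((ℕ × ℕ) × α)) t + cross (N.erase m) t := by
        conv_lhs => rw [← Multiset.cons_erase hmN]
        rw [show m ::ₘ N.erase m = {m} + N.erase m from rfl, cross_add]
      have h3 := hm t
      have h4 := hc t
      simp only [cross_cons, cross_singleton] at *
      omega

/-- cancellation: e and k cross the same cuts -/
lemma helper3 {E'' : Multiset ((ℕ × ℕ) × α)} (e k : (ℕ × ℕ) × α)
    (hm : ∀ t, cross ({e} : Multiset ((ℕ × ℕ) × α)) t = cross {k} t)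
    (h : Sol E'') : Sol (e ::ₘ k ::ₘ E'') := by
  obtain ⟨P, N, hPN, hc⟩ := h
  refine ⟨e ::ₘ P, k ::ₘ N, ?_, ?_⟩
  · have h1 : (e ::ₘ P) + (k ::ₘ N) = e ::ₘ k ::ₘ (P + N) := by
      simp [Multiset.cons_add, Multiset.add_cons, Multiset.cons_swap]
    rw [h1, hPN]
  · intro t
    have h3 := hm t
    have h4 := hc t
    simp only [cross_cons, cross_singleton] at *
    omega

lemma lemA : ∀ (n : ℕ) (E : Multiset ((ℕ × ℕ) × α)), E.card ≤ n →
    (∀ e ∈ E, e.1.1 < e.1.2) → (∀ v, Even (deg E v)) → Sol E := by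
  intro n
  induction n with
  | zero =>
    intro E hcard _ _
    have : E = 0 := by
      rw [← Multiset.card_eq_zero]; omega
    exact ⟨0, 0, by simp [this], fun t => rfl⟩
  | succ n ih =>
    intro E hcard hvalid heven
    rcases eq_or_ne E 0 with rfl | hne
    · exact ⟨0, 0, by simp, fun t => rfl⟩
    obtain ⟨e, he⟩ := Multiset.exists_mem_of_ne_zero hne
    obtain ⟨⟨⟨u, v⟩, a⟩, rfl⟩ : ∃ x, x = e := ⟨e, rfl⟩
    have huv : u < v := hvalid _ he
    have hE : E = ((u,v),a) ::ₘ E.erase ((u,v),a) := (Multiset.cons_erase he).symm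
    set E' := E.erase ((u,v),a) with hE'def
    have hdegv : ¬ Even (deg E' v) := by
      have h := heven v
      rw [hE] at h
      simp only [deg_cons] at h
      rw [Nat.even_iff] at h ⊢
      split_ifs at h <;> omega
    have hex : ∃ k ∈ E', k.1.1 = v ∨ k.1.2 = v := by
      by_contra hno
      push_neg at hno
      have h1 : (E'.filter fun f => f.1.1 = v) = 0 :=
        Multiset.filter_eq_nil.2 (fun k hk hkk => (hno k hk).1 hkk)
      have h2 : (E'.filter fun f => f.1.2 = v) = 0 :=
        Multiset.filter_eq_nil.2 (fun k hk hkk => (hno k hk).2 hkk)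
      exact hdegv (by simp [deg, h1, h2])
    obtain ⟨⟨⟨w1, w2⟩, b⟩, hk, hkv⟩ := hex
    have hkE : ((w1,w2),b) ∈ E := Multiset.mem_of_mem_erase hk
    have hw : w1 < w2 := hvalid _ hkE
    have hE2 : E' = ((w1,w2),b) ::ₘ E'.erase ((w1,w2),b) := (Multiset.cons_erase hk).symm
    set E'' := E'.erase ((w1,w2),b) with hE''def
    have hcard2 : E''.card + 2 = E.card := by
      rw [hE, hE2]; simp
    have hvalid'' : ∀ f ∈ E'', f.1.1 < f.1.2 := fun f hf =>
      hvalid f (Multiset.mem_of_mem_erase (Multiset.mem_of_mem_erase hf))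
    rw [hE, hE2]
    rcases hkv with hk1 | hk2
    · -- k starts at v : same-sign merge into ((u,w2),a)
      simp only at hk1
      subst hk1
      apply helper1 (m := ((u,w2),a))
      · intro t
        simp only [cross_singleton]
        split_ifs <;> omega
      · apply ih
        · rw [Multiset.card_cons]; omega
        · intro f hf
          rcases Multiset.mem_cons.1 hf with rfl | hf
          · exact lt_trans huv hw
          · exact hvalid'' f hf
        · intro v'
          have h := heven v'
          rw [hE, hE2] at h
          simp only [deg_cons] at h ⊢
          rw [Nat.even_iff] at h ⊢
          split_ifs at h ⊢ <;> omega
    · -- k ends at v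
      simp only at hk2
      subst hk2
      rcases lt_trichotomy u w1 with h3 | h3 | h3
      · -- u < w1 : opposite signs, residue ((u,w1),a)
        apply helper2 (m := ((u,w1),a))
        · intro t
          simp only [cross_singleton]
          split_ifs <;> omega
        · apply ih
          · rw [Multiset.card_cons]; omega
          · intro f hf
            rcases Multiset.mem_cons.1 hf with rfl | hf
            · exact h3
            · exact hvalid'' f hf
          · intro v'
            have h := heven v'
            rw [hE, hE2] at h
            simp only [deg_cons] at h ⊢
            rw [Nat.even_iff] at h ⊢
            split_ifs at h ⊢ <;> omega
      · -- equal edges : cancel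
        subst h3
        apply helper3
        · intro t
          simp only [cross_singleton]
        · apply ih
          · omega
          · exact hvalid''
          · intro v'
            have h := heven v'
            rw [hE, hE2] at h
            simp only [deg_cons] at h ⊢
            rw [Nat.even_iff] at h ⊢
            split_ifs at h ⊢ <;> omega
      · -- w1 < u : opposite signs, residue ((w1,u),b)
        rw [Multiset.cons_swap]
        apply helper2 (m := ((w1,u),b))
        · intro t
          simp only [cross_singleton]
          split_ifs <;> omega
        · apply ih
          · rw [Multiset.card_cons]; omega
          · intro f hf
            rcases Multiset.mem_cons.1 hf with rfl | hf
            · exact h3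
            · exact hvalid'' f hf
          · intro v'
            have h := heven v'
            rw [hE, hE2] at h
            simp only [deg_cons] at h ⊢
            rw [Nat.even_iff] at h ⊢
            split_ifs at h ⊢ <;> omega

def pairUp : List ℕ → List (ℕ × ℕ)
  | a :: b :: l => (a, b) :: pairUp l
  | _ => []

lemma pairUp_mem : ∀ (l : List ℕ), l.Pairwise (· < ·) →
    ∀ p ∈ pairUp l, p.1 < p.2 ∧ p.1 ∈ l ∧ p.2 ∈ l := by
  intro l
  induction l using pairUp.induct with
  | case1 a b l ih =>
    intro hs p hp
    rw [List.pairwise_cons] at hs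
    obtain ⟨ha, hs⟩ := hs
    rw [List.pairwise_cons] at hs
    obtain ⟨hb, hs⟩ := hs
    rcases List.mem_cons.1 hp with rfl | hp
    · exact ⟨ha _ (List.mem_cons_self (a := b) (l := l)), List.mem_cons_self,
        List.mem_cons.2 (Or.inr (List.mem_cons_self))⟩
    · obtain ⟨h1, h2, h3⟩ := ih hs p hp
      exact ⟨h1, List.mem_cons.2 (Or.inr (List.mem_cons.2 (Or.inr h2))),
        List.mem_cons.2 (Or.inr (List.mem_cons.2 (Or.inr h3)))⟩
  | case2 l h =>
    intro _ p hp
    simp [pairUp] at hp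

def auxOf (a0 : α) (l : List ℕ) : Multiset ((ℕ × ℕ) × α) :=
  ((pairUp l).map (fun p => (p, a0)) : List ((ℕ × ℕ) × α))

lemma auxOf_cons (a0 : α) (a b : ℕ) (l : List ℕ) :
    auxOf a0 (a :: b :: l) = ((a, b), a0) ::ₘ auxOf a0 l := rfl

lemma auxOf_mem {a0 : α} {l : List ℕ} {e : (ℕ × ℕ) × α} (he : e ∈ auxOf a0 l) :
    e.1 ∈ pairUp l := by
  rw [auxOf, Multiset.mem_coe, List.mem_map] at he
  obtain ⟨p, hp, rfl⟩ := he
  exact hp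

lemma degAux (a0 : α) : ∀ (l : List ℕ), l.Pairwise (· < ·) → Even l.length →
    ∀ v, deg (auxOf a0 l) v = if v ∈ l then 1 else 0 := by
  intro l
  induction l using pairUp.induct with
  | case1 a b l ih =>
    intro hs hlen v
    rw [List.pairwise_cons] at hs
    obtain ⟨ha, hs'⟩ := hs
    rw [List.pairwise_cons] at hs'
    obtain ⟨hb, hs''⟩ := hs'
    have hab : a ≠ b := Nat.ne_of_lt (ha b (List.mem_cons_self (a := b) (l := l)))
    have hal : a ∉ l := fun h => lt_irrefl a (ha a (List.mem_cons.2 (Or.inr h)))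
    have hbl : b ∉ l := fun h => lt_irrefl b (hb b h)
    have hlen' : Even l.length := by
      simp only [List.length_cons] at hlen
      rcases hlen with ⟨m, hm⟩
      exact ⟨m - 1, by omega⟩
    rw [auxOf_cons, deg_cons, ih hs'' hlen' v]
    by_cases h3 : v ∈ l
    · have hva : ¬ (a = v) := fun h => hal (h ▸ h3)
      have hvb : ¬ (b = v) := fun h => hbl (h ▸ h3)
      rw [if_neg hva, if_neg hvb, if_pos h3,
        if_pos (List.mem_cons.2 (Or.inr (List.mem_cons.2 (Or.inr h3))))]
    · by_cases h1 : a = v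
      · subst h1
        rw [if_pos rfl, if_neg (fun h : b = a => hab h.symm), if_neg h3,
          if_pos (List.mem_cons_self)]
      · by_cases h2 : b = v
        · subst h2
          rw [if_neg h1, if_pos rfl, if_neg h3,
            if_pos (List.mem_cons.2 (Or.inr (List.mem_cons_self)))]
        · rw [if_neg h1, if_neg h2, if_neg h3, if_neg (by
            simp only [List.mem_cons]
            push_neg
            exact ⟨fun h => h1 h.symm, fun h => h2 h.symm, h3⟩)]
  | case2 l h =>
    intro hs hlen v
    match l, h with
    | [], _ =>
      simp [auxOf, pairUp]
    | [a], h =>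
      simp at hlen
    | a :: b :: rest, h =>
      exact absurd rfl (h a b rest)

lemma crossAux (a0 : α) : ∀ (l : List ℕ), l.Pairwise (· < ·) →
    ∀ t, cross (auxOf a0 l) t ≤ 1 := by
  intro l
  induction l using pairUp.induct with
  | case1 a b l ih =>
    intro hs t
    rw [List.pairwise_cons] at hs
    obtain ⟨ha, hs'⟩ := hs
    rw [List.pairwise_cons] at hs'
    obtain ⟨hb, hs''⟩ := hs'
    rw [auxOf_cons, cross_cons]
    by_cases hc : a ≤ t ∧ t < b
    · rw [if_pos hc]
      have hz : cross (auxOf a0 l) t = 0 := by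
        rw [cross, Multiset.card_eq_zero, Multiset.filter_eq_nil]
        intro e he hcov
        have h1 := (pairUp_mem l hs'' e.1 (auxOf_mem he)).2.1
        have h2 := hb _ h1
        omega
      omega
    · rw [if_neg hc]
      simpa using ih hs'' t
  | case2 l h =>
    intro hs t
    match l, h with
    | [], _ => simp [auxOf, pairUp, cross]
    | [a], _ => simp [auxOf, pairUp, cross]
    | a :: b :: rest, h => exact absurd rfl (h a b rest)

lemma deg_sum (B : ℕ) : ∀ (E : Multiset ((ℕ × ℕ) × α)),
    (∀ e ∈ E, e.1.1 < B ∧ e.1.2 < B) → (∀ e ∈ E, e.1.1 < e.1.2) →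
    ∑ v ∈ Finset.range B, deg E v = 2 * Multiset.card E := by
  intro E
  induction E using Multiset.induction_on with
  | empty => simp
  | cons e s ih =>
    intro hB hv
    have hB' : ∀ f ∈ s, f.1.1 < B ∧ f.1.2 < B := fun f hf => hB f (Multiset.mem_cons_of_mem hf)
    have hv' : ∀ f ∈ s, f.1.1 < f.1.2 := fun f hf => hv f (Multiset.mem_cons_of_mem hf)
    have he1 := hB e (Multiset.mem_cons_self e s)
    simp only [deg_cons, Finset.sum_add_distrib, ih hB' hv', Multiset.card_cons]
    rw [Finset.sum_ite_eq (Finset.range B) e.1.1 (fun _ => 1),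
      Finset.sum_ite_eq (Finset.range B) e.1.2 (fun _ => 1),
      if_pos (Finset.mem_range.2 he1.1), if_pos (Finset.mem_range.2 he1.2)]
    ring

lemma parity_filter (f : ℕ → ℕ) : ∀ (s : Finset ℕ),
    (∑ v ∈ s, f v) % 2 = (s.filter fun v => ¬ Even (f v)).card % 2 := by
  intro s
  induction s using Finset.induction_on with
  | empty => simp
  | @insert a s ha ih =>
    rw [Finset.sum_insert ha, Finset.filter_insert]
    by_cases hfa : Even (f a)
    · rw [if_neg (by simpa using hfa)]
      rw [Nat.even_iff] at hfa
      omega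
    · rw [if_pos hfa, Finset.card_insert_of_notMem (by simp [ha])]
      have h2 : f a % 2 = 1 := by rw [Nat.even_iff] at hfa; omega
      omega

lemma split_add {β : Type*} [DecidableEq β] {P N E X : Multiset β} (h : P + N = E + X) :
    ∃ P1 P2 N1 N2 : Multiset β,
      P1 + P2 = P ∧ N1 + N2 = N ∧ P1 + N1 = E ∧ P2 + N2 = X := by
  refine ⟨P ∩ E, P - E, E - P, N - (E - P), ?_, ?_, ?_, ?_⟩ <;>
    · ext a
      have hc := congrArg (Multiset.count a) h
      simp only [Multiset.count_add, Multiset.count_sub, Multiset.count_inter] at *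
      omega

lemma lemB (E : Multiset ((ℕ × ℕ) × α)) (a0 : α) (hvalid : ∀ e ∈ E, e.1.1 < e.1.2) :
    ∃ P N, P + N = E ∧ ∀ t : ℕ, cross P t ≤ cross N t + 1 ∧ cross N t ≤ cross P t + 1 := by
  classical
  set B := (E.map fun e => e.1.2).sum + 1 with hBdef
  have hB : ∀ e ∈ E, e.1.1 < B ∧ e.1.2 < B := by
    intro e he
    have h1 : e.1.2 ≤ (E.map fun e => e.1.2).sum :=
      Multiset.single_le_sum (fun x _ => Nat.zero_le x) _ (Multiset.mem_map_of_mem _ he)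
    have h2 := hvalid e he
    omega
  set O := (Finset.range B).filter (fun v => ¬ Even (deg E v)) with hO
  set l := O.sort (· ≤ ·) with hl
  have hsort : l.Pairwise (· < ·) := (Finset.sortedLT_sort O).pairwise
  have hmem_l : ∀ v, v ∈ l ↔ (¬ Even (deg E v) ∧ v < B) := by
    intro v
    rw [hl, Finset.mem_sort, hO, Finset.mem_filter, Finset.mem_range]
    tauto
  have hlen : Even l.length := by
    rw [hl, Finset.length_sort]
    have h1 := deg_sum B E hB hvalid
    have h2 := parity_filter (deg E) (Finset.range B)
    rw [Nat.even_iff]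
    rw [← hO] at h2
    omega
  set X := auxOf a0 l with hX
  have hvalidF : ∀ e ∈ E + X, e.1.1 < e.1.2 := by
    intro e he
    rcases Multiset.mem_add.1 he with h | h
    · exact hvalid e h
    · exact (pairUp_mem l hsort e.1 (auxOf_mem h)).1
  have hevenF : ∀ v, Even (deg (E + X) v) := by
    intro v
    rw [deg_add, hX, degAux a0 l hsort hlen v]
    by_cases hv : Even (deg E v)
    · rw [if_neg (fun h => ((hmem_l v).1 h).1 hv)]
      simpa using hv
    · have hvB : v < B := by
        have hd : deg E v ≠ 0 := fun h => hv (h ▸ Even.zero)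
        have hex : ∃ e ∈ E, e.1.1 = v ∨ e.1.2 = v := by
          by_contra hno
          push_neg at hno
          have h1 : (E.filter fun f => f.1.1 = v) = 0 :=
            Multiset.filter_eq_nil.2 (fun k hk hkk => (hno k hk).1 hkk)
          have h2 : (E.filter fun f => f.1.2 = v) = 0 :=
            Multiset.filter_eq_nil.2 (fun k hk hkk => (hno k hk).2 hkk)
          exact hd (by simp [deg, h1, h2])
        obtain ⟨e, he, hev⟩ := hex
        have := hB e he
        omega
      rw [if_pos ((hmem_l v).2 ⟨hv, hvB⟩)]
      exact Nat.even_add_one.2 hv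
  obtain ⟨P, N, hPN, hc⟩ := lemA (Multiset.card (E + X)) (E + X) le_rfl hvalidF hevenF
  obtain ⟨P1, P2, N1, N2, h1, h2, h3, h4⟩ := split_add hPN
  refine ⟨P1, N1, h3, fun t => ?_⟩
  have e1 : cross P t = cross P1 t + cross P2 t := by rw [← h1, cross_add]
  have e2 : cross N t = cross N1 t + cross N2 t := by rw [← h2, cross_add]
  have e3 : cross P2 t + cross N2 t = cross X t := by rw [← h4, cross_add]
  have e4 : cross X t ≤ 1 := crossAux a0 l hsort t
  have e5 := hc t
  omega

end Stmt10Aux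

open Stmt10Aux

theorem stmt10 (p q : ℕ) (A : Matrix (Fin p) (Fin q) ℤ) (c : Fin p → ℤ)
    (h01 : ∀ i j, A i j = 0 ∨ A i j = 1)
    (hcons : ∀ j : Fin q, ∃ aj bj : ℕ, aj ≤ bj ∧
      ∀ i : Fin p, A i j = 1 ↔ (aj ≤ i.1 ∧ i.1 ≤ bj)) :
    (∃ x : Fin q → ℤ, (∀ j, x j = 0 ∨ x j = 1) ∧
      A.mulVec x ≤ c ∧ A.mulVec (1 - x) ≤ c) ↔
      A.mulVec 1 ≤ 2 • c := by
  constructor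
  · rintro ⟨x, hx01, hx, h1x⟩
    have hsum : A.mulVec 1 = A.mulVec x + A.mulVec (1 - x) := by
      rw [← Matrix.mulVec_add]
      congr 1
      funext j
      simp
    intro i
    have h1 := hx i
    have h2 := h1x i
    rw [hsum]
    simp only [Pi.add_apply, Pi.smul_apply, two_smul]
    exact add_le_add h1 h2
  · intro h2c
    rcases Nat.eq_zero_or_pos q with rfl | hq
    · refine ⟨0, fun j => Or.inl rfl, ?_, ?_⟩ <;>
      · intro i
        have h := h2c i
        simp only [Matrix.mulVec, dotProduct, Finset.univ_eq_empty, Finset.sum_empty,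
          Pi.smul_apply, two_smul] at h ⊢
        omega
    · choose aj bj hab hiff using hcons
      set edge : Fin q → ℕ × ℕ :=
        fun j => if aj j < p then (aj j, min (bj j + 1) p) else (p, p + 1) with hedge
      set f : Fin q → (ℕ × ℕ) × Fin q := fun j => (edge j, j) with hf
      have key : ∀ (i : Fin p) (j : Fin q),
          A i j = 1 ↔ ((edge j).1 ≤ i.1 ∧ i.1 < (edge j).2) := by
        intro i j
        rw [hiff j i]
        have hip := i.isLt
        have := hab j
        simp only [hedge]
        by_cases h : aj j < p
        · rw [if_pos h]
          show aj j ≤ i.1 ∧ i.1 ≤ bj j ↔ aj j ≤ i.1 ∧ i.1 < min (bj j + 1) p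
          omega
        · rw [if_neg h]
          show aj j ≤ i.1 ∧ i.1 ≤ bj j ↔ p ≤ i.1 ∧ i.1 < p + 1
          omega
      have hA01' : ∀ (i : Fin p) (j : Fin q),
          A i j = if (edge j).1 ≤ i.1 ∧ i.1 < (edge j).2 then 1 else 0 := by
        intro i j
        by_cases hc : (edge j).1 ≤ i.1 ∧ i.1 < (edge j).2
        · rw [if_pos hc]
          exact (key i j).2 hc
        · rw [if_neg hc]
          rcases h01 i j with h | h
          · exact h
          · exact absurd ((key i j).1 h) hc
      set E : Multiset ((ℕ × ℕ) × Fin q) := Finset.univ.val.map f with hE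
      have hvalidE : ∀ e ∈ E, e.1.1 < e.1.2 := by
        intro e he
        rw [hE, Multiset.mem_map] at he
        obtain ⟨j, _, rfl⟩ := he
        have := hab j
        simp only [hf, hedge]
        by_cases h : aj j < p
        · rw [if_pos h]
          show aj j < min (bj j + 1) p
          omega
        · rw [if_neg h]
          show p < p + 1
          omega
      obtain ⟨P, N, hPN, hbal⟩ := lemB E ⟨0, hq⟩ hvalidE
      have hnodupE : E.Nodup := by
        rw [hE]
        exact Multiset.Nodup.map (fun j k h => congrArg Prod.snd h) Finset.univ.nodup
      have hcountE : ∀ j, E.count (f j) = 1 := by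
        intro j
        apply Multiset.count_eq_one_of_mem hnodupE
        rw [hE, Multiset.mem_map]
        exact ⟨j, Finset.mem_univ j, rfl⟩
      have hmemN : ∀ j, f j ∈ N ↔ f j ∉ P := by
        intro j
        have hc := congrArg (Multiset.count (f j)) hPN
        rw [Multiset.count_add, hcountE j] at hc
        constructor
        · intro hN hP
          rw [← Multiset.count_pos] at hN hP
          omega
        · intro hP
          rw [← Multiset.count_pos] at hP ⊢
          omega
      -- generic representation lemma
      have hrep : ∀ (M : Multiset ((ℕ × ℕ) × Fin q)), M ≤ E →
          M = (Finset.univ.filter (fun j => f j ∈ M)).val.map f := by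
        intro M hM
        have hnodupM : M.Nodup := Multiset.nodup_of_le hM hnodupE
        have hnodup2 : ((Finset.univ.filter (fun j => f j ∈ M)).val.map f).Nodup :=
          Multiset.Nodup.map (fun j k h => congrArg Prod.snd h)
            (Finset.univ.filter (fun j => f j ∈ M)).nodup
        rw [Multiset.Nodup.ext hnodupM hnodup2]
        intro e
        constructor
        · intro heM
          have heE : e ∈ E := Multiset.mem_of_le hM heM
          rw [hE, Multiset.mem_map] at heE
          obtain ⟨j, _, rfl⟩ := heE
          rw [Multiset.mem_map]
          refine ⟨j, ?_, rfl⟩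
          rw [Finset.mem_val, Finset.mem_filter]
          exact ⟨Finset.mem_univ j, heM⟩
        · intro he
          rw [Multiset.mem_map] at he
          obtain ⟨j, hj, rfl⟩ := he
          rw [Finset.mem_val, Finset.mem_filter] at hj
          exact hj.2
      have hcr : ∀ (M : Multiset ((ℕ × ℕ) × Fin q)) (SM : Finset (Fin q)),
          M = SM.val.map f → ∀ i : Fin p,
          cross M i.1 = (SM.filter (fun j => (edge j).1 ≤ i.1 ∧ i.1 < (edge j).2)).card := by
        intro M SM hMS i
        rw [hMS, cross, Multiset.filter_map, Multiset.card_map]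
        rfl
      have hmv : ∀ (z : Fin q → ℤ) (SM : Finset (Fin q)),
          (∀ j, z j = if j ∈ SM then 1 else 0) → ∀ i : Fin p,
          A.mulVec z i = ((SM.filter (fun j => (edge j).1 ≤ i.1 ∧ i.1 < (edge j).2)).card : ℤ) := by
        intro z SM hz i
        have h0 : A.mulVec z i = ∑ j : Fin q, A i j * z j := by
          simp [Matrix.mulVec, dotProduct]
        have h2 : ∀ j : Fin q, A i j * z j =
            if ((edge j).1 ≤ i.1 ∧ i.1 < (edge j).2) ∧ j ∈ SM then 1 else 0 := by
          intro j
          rw [hA01' i j, hz j]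
          by_cases hc1 : (edge j).1 ≤ i.1 ∧ i.1 < (edge j).2 <;> by_cases hc2 : j ∈ SM <;>
            simp [hc1, hc2]
        rw [h0, Finset.sum_congr rfl (fun j _ => h2 j), Finset.sum_boole]
        norm_num
        congr 1
        ext j
        simp [Finset.mem_filter, and_comm]
      have hPle : P ≤ E := by rw [← hPN]; exact Multiset.le_add_right P N
      have hNle : N ≤ E := by rw [← hPN]; exact Multiset.le_add_left N P
      have hSrep := hrep P hPle
      have hTrep := hrep N hNle
      refine ⟨fun j => if f j ∈ P then 1 else 0,
        fun j => by by_cases hp : f j ∈ P <;> simp [hp], ?_, ?_⟩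
      · intro i
        have e1 := hmv (fun j => if f j ∈ P then 1 else 0)
          (Finset.univ.filter (fun j => f j ∈ P))
          (fun j => by simp [Finset.mem_filter]) i
        have e2 := hcr P _ hSrep i
        have e4 := hmv 1 Finset.univ (fun j => by simp) i
        have e6 := hcr E Finset.univ hE i
        have e5 : cross E i.1 = cross P i.1 + cross N i.1 := by rw [← hPN, cross_add]
        have key2 : ∀ (z w : ℕ) (d : ℤ), ((z + w : ℕ) : ℤ) ≤ d + d → z ≤ w + 1 → (z : ℤ) ≤ d := by
          intro z w d hh1 hh2
          omega
        have h8 := (hbal i.1).1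
        have hmain : ((cross P i.1 + cross N i.1 : ℕ) : ℤ) ≤ c i + c i := by
          rw [← e5, e6, ← e4]
          have h := h2c i
          rw [Pi.smul_apply, two_smul] at h
          exact h
        rw [e1, ← e2]
        exact key2 _ _ _ hmain h8
      · intro i
        have e1 := hmv ((1 : Fin q → ℤ) - fun j => if f j ∈ P then 1 else 0)
          (Finset.univ.filter (fun j => f j ∈ N))
          (fun j => by
            simp only [Pi.sub_apply, Pi.one_apply, Finset.mem_filter, Finset.mem_univ,
              true_and]
            by_cases hp : f j ∈ P
            · have hn : f j ∉ N := fun hn => (hmemN j).1 hn hp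
              simp [hp, hn]
            · have hn : f j ∈ N := (hmemN j).2 hp
              simp [hp, hn]) i
        have e3 := hcr N _ hTrep i
        have e4 := hmv 1 Finset.univ (fun j => by simp) i
        have e6 := hcr E Finset.univ hE i
        have e5 : cross E i.1 = cross P i.1 + cross N i.1 := by rw [← hPN, cross_add]
        have key2 : ∀ (z w : ℕ) (d : ℤ), ((z + w : ℕ) : ℤ) ≤ d + d → z ≤ w + 1 → (z : ℤ) ≤ d := by
          intro z w d hh1 hh2
          omega
        have h8 := (hbal i.1).2
        have hmain : ((cross N i.1 + cross P i.1 : ℕ) : ℤ) ≤ c i + c i := by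
          rw [Nat.add_comm, ← e5, e6, ← e4]
          have h := h2c i
          rw [Pi.smul_apply, two_smul] at h
          exact h
        rw [e1, ← e3]
        exact key2 _ _ _ hmain h8
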